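/- Let F ∈ Homeo_ℤ(ℝ) and k ≥ 0 an integer. Then F is a product of at most k+2 elements of Homeo_ℤ(ℝ), each fixing pointwise a nonempty open interval, if and only if min_{x∈ℝ}|F(x) - x| < k + 1. -/

import Mathlib

def HomeoZ (F : Equiv.Perm ℝ) : Prop :=
  Continuous F ∧ StrictMono F ∧ ∀ x : ℝ, F (x + 1) = F x + 1

def FixesOpenInterval (G : Equiv.Perm ℝ) : Prop :=
  ∃ a b : ℝ, a < b ∧ ∀ x ∈ Set.Ioo a b, G x = x

lemma homeoZ_add_int {F : Equiv.Perm ℝ} (hF : HomeoZ F) (x : ℝ) (n : ℤ) :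
    F (x + n) = F x + n := by
  induction n using Int.induction_on with
  | zero => simp
  | succ n ih => push_cast; rw [← add_assoc, hF.2.2]; push_cast at ih; rw [ih]; ring
  | pred n ih =>
      push_cast at ih ⊢
      have := hF.2.2 (x - (n+1))
      have h1 : x - (n+1) + 1 = x - n := by ring
      rw [h1] at this
      have h2 : x + (-(n:ℝ) - 1) = x - (n+1) := by ring
      rw [h2]
      have h3 : x + -(n : ℝ) = x - n := by ring
      rw [h3] at ih
      linarith

lemma homeoZ_mul {F G : Equiv.Perm ℝ} (hF : HomeoZ F) (hG : HomeoZ G) :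
    HomeoZ (F * G) := by
  refine ⟨hF.1.comp hG.1, hF.2.1.comp hG.2.1, fun x => ?_⟩
  simp only [Equiv.Perm.mul_apply, hG.2.2, hF.2.2]

lemma homeoZ_inv {F : Equiv.Perm ℝ} (hF : HomeoZ F) : HomeoZ F⁻¹ := by
  have hsymm : (F⁻¹ : Equiv.Perm ℝ) = (F.symm : Equiv.Perm ℝ) := rfl
  have hmono : StrictMono (F.symm : ℝ → ℝ) := by
    intro a b hab
    by_contra h
    push_neg at h
    have := hF.2.1.monotone h
    simp only [Equiv.apply_symm_apply] at this
    exact absurd this (not_le.mpr hab)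
  refine ⟨?_, by rw [hsymm]; exact hmono, fun x => ?_⟩
  · rw [hsymm]
    exact hmono.monotone.continuous_of_surjective F.symm.surjective
  · rw [hsymm]
    apply F.injective
    rw [Equiv.apply_symm_apply]
    have := hF.2.2 (F.symm x)
    rw [Equiv.apply_symm_apply] at this
    exact this.symm ▸ rfl

lemma fixes_inv {G : Equiv.Perm ℝ} (hG : FixesOpenInterval G) :
    FixesOpenInterval G⁻¹ := by
  obtain ⟨a, b, hab, hfix⟩ := hG
  exact ⟨a, b, hab, fun x hx => by
    have := hfix x hx
    have : G.symm x = x := by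
      apply G.injective; rw [Equiv.apply_symm_apply, this]
    exact this⟩

noncomputable def glueFun (a : ℝ) (g : ℝ → ℝ) (x : ℝ) : ℝ :=
  g (x - ⌊x - a⌋) + ⌊x - a⌋

lemma glue_mem (a x : ℝ) : x - (⌊x - a⌋ : ℝ) ∈ Set.Ico a (a + 1) := by
  constructor
  · have := Int.floor_le (x - a); linarith
  · have := Int.lt_floor_add_one (x - a); linarith

lemma glue_strictMono {a : ℝ} {g : ℝ → ℝ}
    (hg : StrictMonoOn g (Set.Icc a (a + 1))) (hper : g (a + 1) = g a + 1) :
    StrictMono (glueFun a g) := by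
  intro x y hxy
  have hx := glue_mem a x
  have hy := glue_mem a y
  have hx' : x - (⌊x - a⌋ : ℝ) ∈ Set.Icc a (a+1) := ⟨hx.1, hx.2.le⟩
  have hy' : y - (⌊y - a⌋ : ℝ) ∈ Set.Icc a (a+1) := ⟨hy.1, hy.2.le⟩
  have hfl : ⌊x - a⌋ ≤ ⌊y - a⌋ := Int.floor_le_floor (by linarith)
  unfold glueFun
  rcases eq_or_lt_of_le hfl with heq | hlt
  · rw [heq]
    have : g (x - (⌊y - a⌋:ℝ)) < g (y - (⌊y - a⌋:ℝ)) := by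
      apply hg (heq ▸ hx') hy' (by linarith)
    rw [heq] at *
    linarith
  · have h1 : g (x - (⌊x - a⌋:ℝ)) < g a + 1 := by
      rcases eq_or_lt_of_le hx'.1 with he | hl
      · rw [← he]; linarith
      · have := hg hx' ⟨by linarith, le_refl _⟩ hx.2
        rw [hper] at this; exact this
    have h2 : g a ≤ g (y - (⌊y - a⌋:ℝ)) := by
      rcases eq_or_lt_of_le hy'.1 with he | hl
      · rw [← he]
      · exact (hg ⟨le_refl _, by linarith⟩ hy' hl).le
    have hcast : (⌊x - a⌋ : ℝ) + 1 ≤ (⌊y - a⌋ : ℝ) := by exact_mod_cast hlt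
    linarith

lemma glue_period (a : ℝ) (g : ℝ → ℝ) (x : ℝ) :
    glueFun a g (x + 1) = glueFun a g x + 1 := by
  unfold glueFun
  have : x + 1 - a = x - a + 1 := by ring
  rw [this, Int.floor_add_one]
  push_cast
  ring_nf

lemma glue_eq_on (a : ℝ) (g : ℝ → ℝ) {x : ℝ} (hx : x ∈ Set.Ico a (a + 1)) :
    glueFun a g x = g x := by
  unfold glueFun
  have : ⌊x - a⌋ = 0 := Int.floor_eq_zero_iff.mpr ⟨by linarith [hx.1], by linarith [hx.2]⟩
  rw [this]
  push_cast
  ring_nf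

lemma glue_surjective {a : ℝ} {g : ℝ → ℝ}
    (hc : ContinuousOn g (Set.Icc a (a + 1))) (hper : g (a + 1) = g a + 1) :
    Function.Surjective (glueFun a g) := by
  intro y
  set m : ℤ := ⌊y - g a⌋ with hm
  have h1 : (m : ℝ) ≤ y - g a := Int.floor_le _
  have h2 : y - g a < m + 1 := Int.lt_floor_add_one _
  have hmem : y - m ∈ Set.Icc (g a) (g (a + 1)) := by
    rw [hper]; constructor <;> linarith
  obtain ⟨x, hx, hgx⟩ := intermediate_value_Icc (by linarith : a ≤ a + 1) hc hmem
  rcases lt_or_eq_of_le hx.2 with hlt | heq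
  · refine ⟨x + m, ?_⟩
    unfold glueFun
    have : x + (m:ℝ) - a = x - a + m := by ring
    rw [this, Int.floor_add_intCast]
    have : ⌊x - a⌋ = 0 := Int.floor_eq_zero_iff.mpr ⟨by linarith [hx.1], by linarith⟩
    rw [this]
    push_cast
    rw [show x + (m:ℝ) - (0 + m) = x by ring, hgx]
    ring
  · refine ⟨a + (m + 1), ?_⟩
    unfold glueFun
    have : a + ((m:ℝ) + 1) - a = (m + 1 : ℤ) := by push_cast; ring
    rw [this, Int.floor_intCast]
    push_cast
    rw [show a + ((m:ℝ) + 1) - ((m:ℝ) + 1) = a by ring]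
    have : g x = y - m := hgx
    rw [heq, hper] at this
    linarith

lemma glue_exists {a : ℝ} {g : ℝ → ℝ}
    (hmono : StrictMonoOn g (Set.Icc a (a + 1)))
    (hc : ContinuousOn g (Set.Icc a (a + 1))) (hper : g (a + 1) = g a + 1) :
    ∃ G : Equiv.Perm ℝ, (Continuous G ∧ StrictMono G ∧ ∀ x : ℝ, G (x + 1) = G x + 1) ∧
      ∀ x ∈ Set.Ico a (a + 1), G x = g x := by
  have hsm := glue_strictMono hmono hper
  have hsurj := glue_surjective hc hper
  refine ⟨Equiv.ofBijective _ ⟨hsm.injective, hsurj⟩, ⟨?_, hsm, fun x => glue_period a g x⟩,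
    fun x hx => glue_eq_on a g hx⟩
  exact hsm.monotone.continuous_of_surjective hsurj

noncomputable def lineF (x1 y1 x2 y2 x : ℝ) : ℝ := y1 + (x - x1) * ((y2 - y1) / (x2 - x1))

lemma lineF_left (x1 y1 x2 y2 : ℝ) : lineF x1 y1 x2 y2 x1 = y1 := by
  unfold lineF; ring

lemma lineF_right {x1 x2 : ℝ} (h : x1 ≠ x2) (y1 y2 : ℝ) : lineF x1 y1 x2 y2 x2 = y2 := by
  unfold lineF
  have hne : x2 - x1 ≠ 0 := sub_ne_zero.mpr (Ne.symm h)
  field_simp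
  ring

lemma lineF_strictMono {x1 y1 x2 y2 : ℝ} (hx : x1 < x2) (hy : y1 < y2) :
    StrictMono (lineF x1 y1 x2 y2) := by
  intro u v huv
  unfold lineF
  have hpos : (y2 - y1) / (x2 - x1) > 0 := div_pos (by linarith) (by linarith)
  nlinarith

lemma lineF_continuous (x1 y1 x2 y2 : ℝ) : Continuous (lineF x1 y1 x2 y2) := by
  unfold lineF; fun_prop

lemma strictMonoOn_ite {f h : ℝ → ℝ} {a b c : ℝ} (hac : a ≤ c) (hcb : c ≤ b)
    (hf : StrictMonoOn f (Set.Icc a c)) (hh : StrictMonoOn h (Set.Icc c b))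
    (heq : f c = h c) :
    StrictMonoOn (fun x => if x ≤ c then f x else h x) (Set.Icc a b) := by
  intro x hx y hy hxy
  by_cases hxc : x ≤ c <;> by_cases hyc : y ≤ c <;> simp only [hxc, hyc, if_true, if_false]
  · exact hf ⟨hx.1, hxc⟩ ⟨hy.1, hyc⟩ hxy
  · push_neg at hyc
    calc f x ≤ f c := hf.monotoneOn ⟨hx.1, hxc⟩ ⟨hac, le_refl c⟩ hxc
      _ = h c := heq
      _ < h y := hh ⟨le_refl c, hcb⟩ ⟨hyc.le, hy.2⟩ hyc
  · push_neg at hxc; exact absurd hxy (not_lt.mpr (hyc.trans hxc.le))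
  · push_neg at hxc hyc
    exact hh ⟨hxc.le, hx.2⟩ ⟨hyc.le, hy.2⟩ hxy

lemma bump_exists (p s : ℝ) (hs0 : 0 < s) (hs1 : s < 1) :
    ∃ G : Equiv.Perm ℝ, HomeoZ G ∧ FixesOpenInterval G ∧ G p = p + s := by
  set q1 : ℝ := p + (1 + s) / 2 with hq1
  set q2 : ℝ := p + (3 + s) / 4 with hq2
  have h1 : p + s < q1 := by rw [hq1]; linarith
  have h2 : q1 < q2 := by rw [hq1, hq2]; linarith
  have h3 : q2 < p + 1 := by rw [hq2]; linarith
  have h0 : p < q1 := by linarith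
  set g : ℝ → ℝ := fun x =>
    if x ≤ q1 then lineF p (p + s) q1 q1 x
    else if x ≤ q2 then x else lineF q2 q2 (p + 1) (p + 1 + s) x with hg
  have hmono : StrictMonoOn g (Set.Icc p (p + 1)) := by
    rw [hg]
    apply strictMonoOn_ite h0.le (by linarith)
    · exact (lineF_strictMono h0 h1).strictMonoOn _
    · apply strictMonoOn_ite h2.le h3.le
      · exact strictMono_id.strictMonoOn _
      · exact (lineF_strictMono h3 (by linarith)).strictMonoOn _
      · rw [lineF_left]
    · rw [lineF_right h0.ne, if_pos h2.le]
  have hinner : Continuous fun x => if x ≤ q2 then x else lineF q2 q2 (p + 1) (p + 1 + s) x :=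
    Continuous.if_le continuous_id (lineF_continuous _ _ _ _) continuous_id continuous_const
      (fun x hx => by rw [show x = q2 from hx, lineF_left])
  have hcont : Continuous g := by
    rw [hg]
    exact Continuous.if_le (lineF_continuous _ _ _ _) hinner continuous_id continuous_const
      (fun x hx => by rw [show x = q1 from hx, lineF_right h0.ne, if_pos h2.le])
  have hper : g (p + 1) = g p + 1 := by
    rw [hg]
    simp only
    rw [if_neg (by linarith), if_neg (by linarith), if_pos h0.le,
      lineF_right h3.ne, lineF_left]
    ring
  obtain ⟨G, hGZ, hGeq⟩ := glue_exists hmono hcont.continuousOn hper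
  refine ⟨G, hGZ, ⟨q1, q2, h2, fun x hx => ?_⟩, ?_⟩
  · rw [hGeq x ⟨by linarith [hx.1], by linarith [hx.2]⟩, hg]
    simp only
    rw [if_neg (not_le.mpr hx.1), if_pos hx.2.le]
  · rw [hGeq p ⟨le_refl p, by linarith⟩, hg]
    simp only
    rw [if_pos h0.le, lineF_left]

lemma base_case {F : Equiv.Perm ℝ} (hF : HomeoZ F) {p : ℝ} (h0 : p ≤ F p)
    (h1 : F p - p < 1) :
    ∃ G1 G2 : Equiv.Perm ℝ, HomeoZ G1 ∧ FixesOpenInterval G1 ∧ HomeoZ G2 ∧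
      FixesOpenInterval G2 ∧ F = G1 * G2 := by
  set t : ℝ := F p - p with ht
  have ht0 : 0 ≤ t := by linarith
  have ht1 : t < 1 := h1
  set δ : ℝ := (1 - t) / 4 with hδ
  have hδ0 : 0 < δ := by rw [hδ]; linarith
  -- choose ε by continuity
  have hc : ContinuousAt F p := hF.1.continuousAt
  rw [Metric.continuousAt_iff] at hc
  obtain ⟨d, hd0, hball⟩ := hc δ hδ0
  set ε : ℝ := min (d / 2) (δ / 2) with hε
  have hε0 : 0 < ε := lt_min (by linarith) (by linarith)
  have hεδ : ε < δ := (min_le_right _ _).trans_lt (by linarith)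
  have hεd : ε < d := (min_le_left _ _).trans_lt (by linarith)
  have hFp1 : F (p + ε) < p + t + δ := by
    have : dist (p + ε) p < d := by
      rw [Real.dist_eq]
      rw [abs_of_nonneg (by linarith : (0:ℝ) ≤ p + ε - p)]
      linarith
    have := hball this
    rw [Real.dist_eq, abs_lt] at this
    have hFpt : F p = p + t := by rw [ht]; ring
    linarith [this.2]
  have hFm1 : p + t - δ < F (p - ε) := by
    have : dist (p - ε) p < d := by
      rw [Real.dist_eq]
      rw [abs_of_nonpos (by linarith : p - ε - p ≤ (0:ℝ))]
      linarith
    have := hball this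
    rw [Real.dist_eq, abs_lt] at this
    have hFpt : F p = p + t := by rw [ht]; ring
    linarith [this.1]
  -- key points
  set a : ℝ := p - ε with ha
  set b1 : ℝ := p + ε with hb1
  set c1 : ℝ := p + t + 3 * δ / 2 with hc1
  set c2 : ℝ := p + t + 5 * δ / 2 with hc2
  set top : ℝ := a + 1 with htop
  have hab1 : a < b1 := by rw [ha, hb1]; linarith
  have hb1c1 : b1 < c1 := by
    rw [hb1, hc1]
    have : ε ≤ δ / 2 := min_le_right _ _
    linarith
  have hc1c2 : c1 < c2 := by rw [hc1, hc2]; linarith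
  have hc2top : c2 < top := by rw [hc2, htop, ha]; linarith
  have hFb1c1 : F b1 < c1 := by rw [hc1]; linarith
  have hc2Fa : c2 < F a + 1 := by rw [hc2]; linarith
  have hFab1 : F a < F b1 := hF.2.1 hab1
  -- the function g
  set g : ℝ → ℝ := fun x =>
    if x ≤ b1 then F x
    else if x ≤ c1 then lineF b1 (F b1) c1 c1 x
    else if x ≤ c2 then x
    else lineF c2 c2 top (F a + 1) x with hg
  have htopa : top = a + 1 := htop
  have hmono : StrictMonoOn g (Set.Icc a (a + 1)) := by
    rw [hg, ← htopa]
    apply strictMonoOn_ite hab1.le (by linarith)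
    · exact hF.2.1.strictMonoOn _
    · apply strictMonoOn_ite hb1c1.le (by linarith)
      · exact (lineF_strictMono hb1c1 hFb1c1).strictMonoOn _
      · apply strictMonoOn_ite hc1c2.le hc2top.le
        · exact strictMono_id.strictMonoOn _
        · exact (lineF_strictMono hc2top hc2Fa).strictMonoOn _
        · rw [lineF_left]
      · rw [lineF_right hb1c1.ne, if_pos hc1c2.le]
    · rw [lineF_left, if_pos hb1c1.le]
  have hcont : Continuous g := by
    rw [hg]
    apply Continuous.if_le hF.1 _ continuous_id continuous_const
    · intro x hx
      rw [show x = b1 from hx, lineF_left, if_pos hb1c1.le]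
    · apply Continuous.if_le (lineF_continuous _ _ _ _) _ continuous_id continuous_const
      · intro x hx
        rw [show x = c1 from hx, lineF_right hb1c1.ne, if_pos hc1c2.le]
      · exact Continuous.if_le continuous_id (lineF_continuous _ _ _ _) continuous_id
          continuous_const (fun x hx => by rw [show x = c2 from hx, lineF_left])
  have hper : g (a + 1) = g a + 1 := by
    rw [hg, ← htopa]
    simp only
    rw [if_neg (by linarith), if_neg (by linarith), if_neg (by linarith),
      if_pos hab1.le, lineF_right hc2top.ne]
  obtain ⟨G2, hG2Z, hG2eq⟩ := glue_exists hmono hcont.continuousOn hper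
  have hG2F : ∀ x, a < x → x < b1 → G2 x = F x := by
    intro x hx1 hx2
    rw [hG2eq x ⟨hx1.le, by rw [← htopa]; linarith⟩, hg]
    simp only
    rw [if_pos hx2.le]
  have hG2fix : FixesOpenInterval G2 := by
    refine ⟨c1, c2, hc1c2, fun x hx => ?_⟩
    rw [hG2eq x ⟨by linarith [hx.1], by rw [← htopa]; linarith [hx.2]⟩, hg]
    simp only
    rw [if_neg (by linarith [hx.1]), if_neg (not_le.mpr hx.1), if_pos hx.2.le]
  refine ⟨F * G2⁻¹, G2, homeoZ_mul hF (homeoZ_inv hG2Z), ?_, hG2Z, hG2fix,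
    (inv_mul_cancel_right F G2).symm⟩
  refine ⟨F a, F b1, hFab1, fun y hy => ?_⟩
  have hx1 : a < F.symm y := by
    have := hy.1
    have h2 : F (F.symm y) = y := F.apply_symm_apply y
    by_contra hcon
    push_neg at hcon
    have := hF.2.1.monotone hcon
    rw [h2] at this
    linarith [hy.1]
  have hx2 : F.symm y < b1 := by
    have h2 : F (F.symm y) = y := F.apply_symm_apply y
    by_contra hcon
    push_neg at hcon
    have := hF.2.1.monotone hcon
    rw [h2] at this
    linarith [hy.2]
  have hGx : G2 (F.symm y) = y := by
    rw [hG2F _ hx1 hx2, F.apply_symm_apply]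
  have hGinv : G2⁻¹ y = F.symm y := by
    have : G2.symm y = F.symm y := by
      apply G2.injective
      rw [Equiv.apply_symm_apply, hGx]
    exact this
  show F (G2⁻¹ y) = y
  rw [hGinv, F.apply_symm_apply]

lemma main_ind : ∀ k : ℕ, ∀ F : Equiv.Perm ℝ, HomeoZ F → ∀ x0 : ℝ, x0 ≤ F x0 →
    F x0 - x0 < k + 1 →
    ∃ L : List (Equiv.Perm ℝ), L.length ≤ k + 2 ∧
      (∀ G ∈ L, HomeoZ G ∧ FixesOpenInterval G) ∧ F = L.prod := by
  intro k
  induction k with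
  | zero =>
      intro F hF x0 h0 h1
      obtain ⟨G1, G2, hZ1, hfix1, hZ2, hfix2, hF12⟩ := base_case hF h0 (by push_cast at h1; linarith)
      refine ⟨[G1, G2], by simp, ?_, by simp [hF12]⟩
      intro G hG
      simp only [List.mem_cons, List.mem_singleton, List.not_mem_nil, or_false] at hG
      rcases hG with rfl | rfl
      · exact ⟨hZ1, hfix1⟩
      · exact ⟨hZ2, hfix2⟩
  | succ k ih =>
      intro F hF x0 h0 h1
      set t : ℝ := F x0 - x0 with htdef
      by_cases hsmall : t < k + 1
      · obtain ⟨L, hlen, hmem, hprod⟩ := ih F hF x0 h0 hsmall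
        exact ⟨L, by omega, hmem, hprod⟩
      · push_neg at hsmall
        have ht2 : t < k + 2 := by push_cast at h1; linarith
        set t' : ℝ := (t + k) / 2 with ht'
        set s : ℝ := (t - k) / 2 with hs
        have hs0 : 0 < s := by rw [hs]; linarith
        have hs1 : s < 1 := by rw [hs]; linarith
        obtain ⟨G, hGZ, hGfix, hGp⟩ := bump_exists (x0 + t') s hs0 hs1
        have hFx0 : F x0 = x0 + t := by rw [htdef]; ring
        have hGval : G (x0 + t') = x0 + t := by rw [hGp]; rw [ht', hs]; ring
        have hGinv : G⁻¹ (x0 + t) = x0 + t' := by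
          rw [← hGval]; exact G.symm_apply_apply _
        set F' : Equiv.Perm ℝ := G⁻¹ * F with hF'
        have hF'Z : HomeoZ F' := homeoZ_mul (homeoZ_inv hGZ) hF
        have hF'x0 : F' x0 = x0 + t' := by
          rw [hF']
          show G⁻¹ (F x0) = x0 + t'
          rw [hFx0, hGinv]
        obtain ⟨L', hlen', hmem', hprod'⟩ := ih F' hF'Z x0
          (by rw [hF'x0]; rw [ht']; nlinarith [Nat.cast_nonneg (α := ℝ) k])
          (by rw [hF'x0]; rw [ht']; push_cast; linarith)
        refine ⟨G :: L', by simp; omega, ?_, ?_⟩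
        · intro H hH
          rcases List.mem_cons.mp hH with rfl | hH'
          · exact ⟨hGZ, hGfix⟩
          · exact hmem' H hH'
        · rw [List.prod_cons, ← hprod', hF', mul_inv_cancel_left]

lemma disp_lt_one {G : Equiv.Perm ℝ} (hZ : HomeoZ G) (hfix : FixesOpenInterval G) :
    ∀ x : ℝ, |G x - x| < 1 := by
  obtain ⟨a, b, hab, hfx⟩ := hfix
  set c : ℝ := (a + b) / 2 with hc
  have hcmem : c ∈ Set.Ioo a b := ⟨by rw [hc]; linarith, by rw [hc]; linarith⟩
  have hGc : G c = c := hfx c hcmem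
  intro x
  set n : ℤ := ⌊x - c⌋ with hn
  set y : ℝ := x - n with hy
  have hy1 : c ≤ y := by
    have := Int.floor_le (x - c); rw [hy]; linarith
  have hy2 : y < c + 1 := by
    have := Int.lt_floor_add_one (x - c); rw [hy]; push_cast; linarith
  have hGy1 : c ≤ G y := by
    rcases eq_or_lt_of_le hy1 with he | hl
    · rw [← he, hGc]
    · exact (hGc ▸ hZ.2.1 hl).le
  have hGy2 : G y < c + 1 := by
    have hGc1 : G (c + 1) = c + 1 := by rw [hZ.2.2, hGc]
    rcases eq_or_lt_of_le hy1 with he | hl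
    · rw [← he, hGc]; linarith
    · calc G y < G (c + 1) := hZ.2.1 hy2
        _ = c + 1 := hGc1
  have hGx : G x = G y + n := by
    have : x = y + n := by rw [hy]; ring
    rw [this, homeoZ_add_int hZ]
  rw [abs_lt]
  constructor
  · rw [hGx]; rw [hy] at hy2; push_cast at hy2 ⊢; linarith
  · rw [hGx]; rw [hy] at hy1; push_cast at hy1 ⊢; linarith

lemma disp_prod_le : ∀ L : List (Equiv.Perm ℝ),
    (∀ G ∈ L, ∀ x : ℝ, |G x - x| < 1) → ∀ x : ℝ, |L.prod x - x| ≤ L.length := by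
  intro L
  induction L with
  | nil => intro _ x; simp
  | cons G L ih =>
      intro h x
      have h1 : |G (L.prod x) - L.prod x| < 1 := h G List.mem_cons_self _
      have h2 : |L.prod x - x| ≤ L.length := ih (fun H hH => h H (List.mem_cons_of_mem G hH)) x
      have h3 : (G :: L).prod x = G (L.prod x) := by
        rw [List.prod_cons]; rfl
      rw [h3]
      calc |G (L.prod x) - x| ≤ |G (L.prod x) - L.prod x| + |L.prod x - x| := abs_sub_le _ _ _
        _ ≤ 1 + L.length := by linarith
        _ = ((G :: L).length : ℝ) := by simp; ring

theorem fragmentation_norm_criterion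
    (F : Equiv.Perm ℝ) (hF : HomeoZ F) (k : ℕ) :
    (∃ L : List (Equiv.Perm ℝ), L.length ≤ k + 2 ∧
        (∀ G ∈ L, HomeoZ G ∧ FixesOpenInterval G) ∧ F = L.prod) ↔
      sInf (Set.range fun x : ℝ => |F x - x|) < (k : ℝ) + 1 := by
  have hbdd : BddBelow (Set.range fun x : ℝ => |F x - x|) :=
    ⟨0, fun y ⟨x, hx⟩ => hx ▸ abs_nonneg _⟩
  constructor
  · rintro ⟨L, hlen, hmem, hFL⟩
    rcases L.eq_nil_or_concat' with rfl | ⟨L', G, rfl⟩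
    · have : |F 0 - 0| = 0 := by rw [hFL]; simp
      calc sInf (Set.range fun x : ℝ => |F x - x|) ≤ |F 0 - 0| := csInf_le hbdd ⟨0, rfl⟩
        _ < (k : ℝ) + 1 := by rw [this]; positivity
    · obtain ⟨a, b, hab, hfx⟩ := (hmem G (by simp)).2
      set c : ℝ := (a + b) / 2 with hc
      have hGc : G c = c := hfx c ⟨by rw [hc]; linarith, by rw [hc]; linarith⟩
      have hFc : F c = L'.prod c := by
        rw [hFL, List.prod_append, List.prod_singleton]
        show L'.prod (G c) = L'.prod c
        rw [hGc]
      have hlen' : (L'.length : ℝ) ≤ k + 1 := by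
        have : L'.length + 1 ≤ k + 2 := by simpa using hlen
        exact_mod_cast by omega
      have hdisp : ∀ H ∈ L', ∀ x : ℝ, |H x - x| < 1 := fun H hH x =>
        disp_lt_one (hmem H (by simp [hH])).1 (hmem H (by simp [hH])).2 x
      have hFcc : |F c - c| < (k : ℝ) + 1 := by
        rcases L'.eq_nil_or_concat' with rfl | ⟨L'', H, rfl⟩
        · rw [hFc]
          simp only [List.prod_nil, Equiv.Perm.coe_one, id_eq, sub_self, abs_zero]
          positivity
        · rw [hFc, List.prod_append, List.prod_singleton]
          have e1 : (L'' ++ [H]).prod c = L''.prod (H c) := by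
            rw [List.prod_append, List.prod_singleton]; rfl
          have h1 : |H c - c| < 1 := hdisp H (by simp) c
          have h2 : |L''.prod (H c) - H c| ≤ L''.length :=
            disp_prod_le L'' (fun K hK x => hdisp K (by simp [hK]) x) (H c)
          have hlen'' : (L''.length : ℝ) + 1 ≤ (k : ℝ) + 1 := by
            have : ((L'' ++ [H]).length : ℝ) ≤ k + 1 := hlen'
            simpa using this
          calc |L''.prod (H c) - c|
              ≤ |L''.prod (H c) - H c| + |H c - c| := abs_sub_le _ _ _
            _ < L''.length + 1 := by linarith
            _ ≤ (k : ℝ) + 1 := hlen''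
      calc sInf (Set.range fun x : ℝ => |F x - x|) ≤ |F c - c| := csInf_le hbdd ⟨c, rfl⟩
        _ < (k : ℝ) + 1 := hFcc
  · intro h
    obtain ⟨_, ⟨x0, rfl⟩, hx0⟩ :=
      (csInf_lt_iff hbdd (Set.range_nonempty _)).mp h
    have hx0' : |F x0 - x0| < (k : ℝ) + 1 := hx0
    by_cases hsign : x0 ≤ F x0
    · have : F x0 - x0 < (k : ℝ) + 1 := by
        rw [abs_of_nonneg (by linarith)] at hx0'; exact hx0'
      exact main_ind k F hF x0 hsign this
    · push_neg at hsign
      have hFZ : HomeoZ F⁻¹ := homeoZ_inv hF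
      have hy0 : F x0 ≤ F⁻¹ (F x0) := by
        rw [show F⁻¹ (F x0) = x0 from F.symm_apply_apply x0]
        linarith
      have hy1 : F⁻¹ (F x0) - F x0 < (k : ℝ) + 1 := by
        rw [show F⁻¹ (F x0) = x0 from F.symm_apply_apply x0]
        rw [abs_of_nonpos (by linarith)] at hx0'
        linarith
      obtain ⟨L, hlen, hmem, hFL⟩ := main_ind k F⁻¹ hFZ (F x0) hy0 hy1
      refine ⟨(L.map fun H => H⁻¹).reverse, by simpa using hlen, ?_, ?_⟩
      · intro G hG
        simp only [List.mem_reverse, List.mem_map] at hG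
        obtain ⟨H, hH, rfl⟩ := hG
        exact ⟨homeoZ_inv (hmem H hH).1, fixes_inv (hmem H hH).2⟩
      · rw [← List.prod_inv_reverse, ← hFL, inv_inv]
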